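/- Shearer's inequality: if 𝒮 is a uniform k-cover of [n], then for any random variable X = (X_1,...,X_n) taking values in B_1 × ⋯ × B_n, k·H(X) ≤ Σ_{S ∈ 𝒮} H(X_S), where X_S = (X_i : i ∈ S). -/

import Mathlib

attribute [local instance] Classical.propDecidable

/-- Shannon entropy of a discrete random variable with distribution `p`. -/
noncomputable def shannonEntropy {α : Type*} (p : PMF α) : ℝ :=
  ∑' a, Real.negMulLog ((p a).toReal)

section abs
variable {Ω : Type*} [Fintype Ω]

noncomputable def mass (p : Ω → ℝ) {α : Type*} (f : Ω → α) (a : α) : ℝ :=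
  ∑ x, if f x = a then p x else 0

noncomputable def pushEnt (p : Ω → ℝ) {α : Type*} [Fintype α] (f : Ω → α) : ℝ :=
  ∑ a, Real.negMulLog (mass p f a)

lemma mass_nonneg {p : Ω → ℝ} (hp : ∀ x, 0 ≤ p x) {α : Type*} (f : Ω → α) (a : α) :
    0 ≤ mass p f a :=
  Finset.sum_nonneg fun x _ => by split <;> simp [hp x]

lemma gibbs {ι : Type*} (s : Finset ι) (p q : ι → ℝ)
    (hp : ∀ i ∈ s, 0 ≤ p i) (hq : ∀ i ∈ s, 0 ≤ q i)
    (habs : ∀ i ∈ s, q i = 0 → p i = 0)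
    (hsum : ∑ i ∈ s, q i ≤ ∑ i ∈ s, p i) :
    ∑ i ∈ s, Real.negMulLog (p i) ≤ -∑ i ∈ s, p i * Real.log (q i) := by
  have key : ∀ i ∈ s, Real.negMulLog (p i) + p i * Real.log (q i) ≤ q i - p i := by
    intro i hi
    rcases eq_or_lt_of_le (hp i hi) with h0 | h0
    · simp [← h0, Real.negMulLog]
      exact hq i hi
    · have hq0 : 0 < q i := by
        rcases eq_or_lt_of_le (hq i hi) with h1 | h1
        · exact absurd (habs i hi h1.symm) (ne_of_gt h0)
        · exact h1
      have heq : Real.negMulLog (p i) + p i * Real.log (q i) = p i * Real.log (q i / p i) := by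
        rw [Real.log_div (ne_of_gt hq0) (ne_of_gt h0), Real.negMulLog]; ring
      rw [heq]
      calc p i * Real.log (q i / p i) ≤ p i * (q i / p i - 1) :=
            mul_le_mul_of_nonneg_left (Real.log_le_sub_one_of_pos (div_pos hq0 h0)) h0.le
        _ = q i - p i := by field_simp
  have h2 := Finset.sum_le_sum key
  rw [Finset.sum_add_distrib, Finset.sum_sub_distrib] at h2
  linarith

lemma pushEnt_comp_inj (p : Ω → ℝ) {α β : Type*} [Fintype α] [Fintype β]
    (f : Ω → α) (φ : α → β) (hφ : Function.Injective φ) :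
    pushEnt p (fun x => φ (f x)) = pushEnt p f := by
  unfold pushEnt
  have h1 : ∑ b : β, Real.negMulLog (mass p (fun x => φ (f x)) b) =
      ∑ b ∈ Finset.image φ Finset.univ, Real.negMulLog (mass p (fun x => φ (f x)) b) := by
    refine (Finset.sum_subset (Finset.subset_univ _) ?_).symm
    intro b _ hb
    have hz : mass p (fun x => φ (f x)) b = 0 := by
      refine Finset.sum_eq_zero fun x _ => ?_
      rw [if_neg]
      intro h
      exact hb (Finset.mem_image.mpr ⟨f x, Finset.mem_univ _, h⟩)
    simp [hz]
  rw [h1, Finset.sum_image (fun a _ b _ h => hφ h)]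
  refine Finset.sum_congr rfl fun a _ => ?_
  congr 1
  exact Finset.sum_congr rfl fun x _ => by simp [hφ.eq_iff]


lemma sum3 {α β γ M : Type*} [Fintype α] [Fintype β] [Fintype γ] [AddCommMonoid M]
    (F : α × β × γ → M) :
    ∑ w : α × β × γ, F w = ∑ a, ∑ b, ∑ c, F (a, b, c) := by
  rw [Fintype.sum_prod_type]
  exact Finset.sum_congr rfl fun a _ => Fintype.sum_prod_type _

lemma swap_cab {α β γ M : Type*} [Fintype α] [Fintype β] [Fintype γ] [AddCommMonoid M]
    (F : α → β → γ → M) :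
    ∑ a, ∑ b, ∑ c, F a b c = ∑ c, ∑ a, ∑ b, F a b c := by
  calc ∑ a, ∑ b, ∑ c, F a b c = ∑ a, ∑ c, ∑ b, F a b c :=
        Finset.sum_congr rfl fun a _ => Finset.sum_comm
    _ = ∑ c, ∑ a, ∑ b, F a b c := Finset.sum_comm

lemma swap_bca {α β γ M : Type*} [Fintype α] [Fintype β] [Fintype γ] [AddCommMonoid M]
    (F : α → β → γ → M) :
    ∑ a, ∑ b, ∑ c, F a b c = ∑ b, ∑ c, ∑ a, F a b c := by
  calc ∑ a, ∑ b, ∑ c, F a b c = ∑ b, ∑ a, ∑ c, F a b c := Finset.sum_comm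
    _ = ∑ b, ∑ c, ∑ a, F a b c := Finset.sum_congr rfl fun b _ => Finset.sum_comm

lemma pushEnt_submodular (p : Ω → ℝ) (hp : ∀ x, 0 ≤ p x)
    {α β γ : Type*} [Fintype α] [Fintype β] [Fintype γ]
    (f : Ω → α) (g : Ω → β) (h : Ω → γ) :
    pushEnt p (fun x => (f x, g x, h x)) + pushEnt p h ≤
      pushEnt p (fun x => (f x, h x)) + pushEnt p (fun x => (g x, h x)) := by
  set P : α × β × γ → ℝ := mass p (fun x => (f x, g x, h x)) with hPdef
  set A : α × γ → ℝ := mass p (fun x => (f x, h x)) with hAdef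
  set Bq : β × γ → ℝ := mass p (fun x => (g x, h x)) with hBdef
  set R : γ → ℝ := mass p h with hRdef
  -- marginal identities
  have hA : ∀ a c, A (a, c) = ∑ b, P (a, b, c) := by
    intro a c
    rw [hAdef, hPdef]
    unfold mass
    rw [Finset.sum_comm]
    refine Finset.sum_congr rfl fun x _ => ?_
    by_cases h1 : f x = a <;> by_cases h2 : h x = c <;>
      simp [Prod.ext_iff, h1, h2, ite_and, Finset.sum_ite_eq]
  have hB : ∀ b c, Bq (b, c) = ∑ a, P (a, b, c) := by
    intro b c
    rw [hBdef, hPdef]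
    unfold mass
    rw [Finset.sum_comm]
    refine Finset.sum_congr rfl fun x _ => ?_
    by_cases h1 : g x = b <;> by_cases h2 : h x = c <;>
      simp [Prod.ext_iff, h1, h2, ite_and, Finset.sum_ite_eq]
  have hRA : ∀ c, R c = ∑ a, A (a, c) := by
    intro c
    rw [hRdef, hAdef]
    unfold mass
    rw [Finset.sum_comm]
    refine Finset.sum_congr rfl fun x _ => ?_
    by_cases h2 : h x = c <;>
      simp [Prod.ext_iff, h2, ite_and, Finset.sum_ite_eq]
  have hRB : ∀ c, R c = ∑ b, Bq (b, c) := by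
    intro c
    rw [hRdef, hBdef]
    unfold mass
    rw [Finset.sum_comm]
    refine Finset.sum_congr rfl fun x _ => ?_
    by_cases h2 : h x = c <;>
      simp [Prod.ext_iff, h2, ite_and, Finset.sum_ite_eq]
  have hR : ∀ c, R c = ∑ a, ∑ b, P (a, b, c) := fun c => by
    rw [hRA c]; exact Finset.sum_congr rfl fun a _ => hA a c
  -- nonnegativity and domination
  have hPn : ∀ w, 0 ≤ P w := fun w => mass_nonneg hp _ w
  have hAn : ∀ y, 0 ≤ A y := fun y => mass_nonneg hp _ y
  have hBn : ∀ y, 0 ≤ Bq y := fun y => mass_nonneg hp _ y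
  have hRn : ∀ c, 0 ≤ R c := fun c => mass_nonneg hp _ c
  have hPA : ∀ a b c, P (a, b, c) ≤ A (a, c) := by
    intro a b c
    rw [hA a c]
    exact Finset.single_le_sum (fun b _ => hPn (a, b, c)) (Finset.mem_univ b)
  have hPB : ∀ a b c, P (a, b, c) ≤ Bq (b, c) := by
    intro a b c
    rw [hB b c]
    exact Finset.single_le_sum (fun a _ => hPn (a, b, c)) (Finset.mem_univ a)
  have hAR : ∀ a c, A (a, c) ≤ R c := by
    intro a c
    rw [hRA c]
    exact Finset.single_le_sum (fun a _ => hAn (a, c)) (Finset.mem_univ a)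
  -- the auxiliary distribution
  set Q : α × β × γ → ℝ := fun w => A (w.1, w.2.2) * Bq (w.2.1, w.2.2) / R w.2.2 with hQdef
  have hQn : ∀ w, 0 ≤ Q w := fun w =>
    div_nonneg (mul_nonneg (hAn _) (hBn _)) (hRn _)
  have habs : ∀ w, Q w = 0 → P w = 0 := by
    rintro ⟨a, b, c⟩ hw
    by_cases hRc : R c = 0
    · exact le_antisymm (((hPA a b c).trans (hAR a c)).trans hRc.le) (hPn _)
    · rw [hQdef] at hw
      simp only [div_eq_zero_iff, mul_eq_zero] at hw
      rcases hw with (hw | hw) | hw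
      · exact le_antisymm ((hPA a b c).trans hw.le) (hPn _)
      · exact le_antisymm ((hPB a b c).trans hw.le) (hPn _)
      · exact absurd hw hRc
  have hsumQ : ∑ w : α × β × γ, Q w ≤ ∑ w : α × β × γ, P w := by
    have hQc : ∀ c, ∑ a, ∑ b, Q (a, b, c) = if R c = 0 then 0 else R c := by
      intro c
      by_cases hRc : R c = 0
      · rw [if_pos hRc]
        refine Finset.sum_eq_zero fun a _ => Finset.sum_eq_zero fun b _ => ?_
        have hA0 : A (a, c) = 0 :=
          le_antisymm ((hAR a c).trans hRc.le) (hAn _)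
        simp [hQdef, hA0]
      · rw [if_neg hRc]
        have step1 : ∑ a, ∑ b, Q (a, b, c)
            = ∑ a, A (a, c) / R c * ∑ b, Bq (b, c) := by
          refine Finset.sum_congr rfl fun a _ => ?_
          rw [Finset.mul_sum]
          exact Finset.sum_congr rfl fun b _ => by
            show A (a, c) * Bq (b, c) / R c = _
            ring
        rw [step1, ← hRB c]
        have step2 : (∑ a, A (a, c) / R c * R c) = ∑ a, A (a, c) :=
          Finset.sum_congr rfl fun a _ => by field_simp
        rw [step2]
        exact (hRA c).symm
    calc ∑ w : α × β × γ, Q w = ∑ a, ∑ b, ∑ c, Q (a, b, c) := sum3 Q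
      _ = ∑ c, ∑ a, ∑ b, Q (a, b, c) := swap_cab _
      _ = ∑ c, if R c = 0 then 0 else R c := Finset.sum_congr rfl fun c _ => hQc c
      _ ≤ ∑ c, R c := Finset.sum_le_sum fun c _ => by split <;> simp [hRn c]
      _ = ∑ c, ∑ a, ∑ b, P (a, b, c) := Finset.sum_congr rfl fun c _ => hR c
      _ = ∑ a, ∑ b, ∑ c, P (a, b, c) := (swap_cab _).symm
      _ = ∑ w : α × β × γ, P w := (sum3 P).symm
  -- Gibbs
  have hgibbs := gibbs Finset.univ P Q (fun w _ => hPn w) (fun w _ => hQn w)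
    (fun w _ => habs w) hsumQ
  -- rewrite the cross term
  have hcross : ∀ w : α × β × γ, P w * Real.log (Q w) =
      P w * Real.log (A (w.1, w.2.2)) + P w * Real.log (Bq (w.2.1, w.2.2))
        - P w * Real.log (R w.2.2) := by
    rintro ⟨a, b, c⟩
    by_cases hPw : P (a, b, c) = 0
    · simp [hPw]
    · have hP0 : 0 < P (a, b, c) := lt_of_le_of_ne (hPn _) (Ne.symm hPw)
      have hA0 : 0 < A (a, c) := lt_of_lt_of_le hP0 (hPA a b c)
      have hB0 : 0 < Bq (b, c) := lt_of_lt_of_le hP0 (hPB a b c)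
      have hR0 : 0 < R c := lt_of_lt_of_le hA0 (hAR a c)
      show P (a, b, c) * Real.log (A (a, c) * Bq (b, c) / R c) = _
      rw [Real.log_div (by positivity) (ne_of_gt hR0),
        Real.log_mul (ne_of_gt hA0) (ne_of_gt hB0)]
      ring
  -- marginal entropy identities
  have hlogA : ∑ w : α × β × γ, P w * Real.log (A (w.1, w.2.2))
      = ∑ y : α × γ, A y * Real.log (A y) := by
    calc ∑ w : α × β × γ, P w * Real.log (A (w.1, w.2.2))
        = ∑ a, ∑ b, ∑ c, P (a, b, c) * Real.log (A (a, c)) := sum3 _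
      _ = ∑ a, ∑ c, ∑ b, P (a, b, c) * Real.log (A (a, c)) :=
          Finset.sum_congr rfl fun a _ => Finset.sum_comm
      _ = ∑ a, ∑ c, (∑ b, P (a, b, c)) * Real.log (A (a, c)) :=
          Finset.sum_congr rfl fun a _ => Finset.sum_congr rfl fun c _ =>
            (Finset.sum_mul _ _ _).symm
      _ = ∑ a, ∑ c, A (a, c) * Real.log (A (a, c)) :=
          Finset.sum_congr rfl fun a _ => Finset.sum_congr rfl fun c _ => by rw [← hA a c]
      _ = ∑ y : α × γ, A y * Real.log (A y) :=
          (Fintype.sum_prod_type fun y => A y * Real.log (A y)).symm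
  have hlogB : ∑ w : α × β × γ, P w * Real.log (Bq (w.2.1, w.2.2))
      = ∑ y : β × γ, Bq y * Real.log (Bq y) := by
    calc ∑ w : α × β × γ, P w * Real.log (Bq (w.2.1, w.2.2))
        = ∑ a, ∑ b, ∑ c, P (a, b, c) * Real.log (Bq (b, c)) := sum3 _
      _ = ∑ b, ∑ c, ∑ a, P (a, b, c) * Real.log (Bq (b, c)) := swap_bca _
      _ = ∑ b, ∑ c, (∑ a, P (a, b, c)) * Real.log (Bq (b, c)) :=
          Finset.sum_congr rfl fun b _ => Finset.sum_congr rfl fun c _ =>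
            (Finset.sum_mul _ _ _).symm
      _ = ∑ b, ∑ c, Bq (b, c) * Real.log (Bq (b, c)) :=
          Finset.sum_congr rfl fun b _ => Finset.sum_congr rfl fun c _ => by rw [← hB b c]
      _ = ∑ y : β × γ, Bq y * Real.log (Bq y) :=
          (Fintype.sum_prod_type fun y => Bq y * Real.log (Bq y)).symm
  have hlogR : ∑ w : α × β × γ, P w * Real.log (R w.2.2)
      = ∑ c, R c * Real.log (R c) := by
    calc ∑ w : α × β × γ, P w * Real.log (R w.2.2)
        = ∑ a, ∑ b, ∑ c, P (a, b, c) * Real.log (R c) := sum3 _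
      _ = ∑ c, ∑ a, ∑ b, P (a, b, c) * Real.log (R c) := swap_cab _
      _ = ∑ c, (∑ a, ∑ b, P (a, b, c)) * Real.log (R c) := by
          refine Finset.sum_congr rfl fun c _ => ?_
          rw [Finset.sum_mul]
          exact Finset.sum_congr rfl fun a _ => (Finset.sum_mul _ _ _).symm
      _ = ∑ c, R c * Real.log (R c) := Finset.sum_congr rfl fun c _ => by rw [← hR c]
  -- put it together
  have hexp : ∑ w : α × β × γ, P w * Real.log (Q w)
      = ∑ y : α × γ, A y * Real.log (A y) + ∑ y : β × γ, Bq y * Real.log (Bq y)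
        - ∑ c, R c * Real.log (R c) := by
    rw [show ∑ w : α × β × γ, P w * Real.log (Q w)
        = ∑ w : α × β × γ, (P w * Real.log (A (w.1, w.2.2))
          + P w * Real.log (Bq (w.2.1, w.2.2)) - P w * Real.log (R w.2.2)) from
      Finset.sum_congr rfl fun w _ => hcross w]
    rw [Finset.sum_sub_distrib, Finset.sum_add_distrib, hlogA, hlogB, hlogR]
  have hEA : pushEnt p (fun x => (f x, h x)) = -∑ y : α × γ, A y * Real.log (A y) := by
    unfold pushEnt
    rw [← Finset.sum_neg_distrib]
    exact Finset.sum_congr rfl fun y _ => by rw [Real.negMulLog, ← hAdef]; ring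
  have hEB : pushEnt p (fun x => (g x, h x)) = -∑ y : β × γ, Bq y * Real.log (Bq y) := by
    unfold pushEnt
    rw [← Finset.sum_neg_distrib]
    exact Finset.sum_congr rfl fun y _ => by rw [Real.negMulLog, ← hBdef]; ring
  have hER : pushEnt p h = -∑ c, R c * Real.log (R c) := by
    unfold pushEnt
    rw [← Finset.sum_neg_distrib]
    exact Finset.sum_congr rfl fun y _ => by rw [Real.negMulLog, ← hRdef]; ring
  have hEP : pushEnt p (fun x => (f x, g x, h x))
      = ∑ w : α × β × γ, Real.negMulLog (P w) := rfl
  rw [hEP, hEA, hEB, hER]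
  rw [hexp] at hgibbs
  linarith


lemma shannon_eq_pushEnt {α : Type*} [Fintype α] (p : PMF Ω) (f : Ω → α) :
    shannonEntropy (p.map f) = pushEnt (fun x => (p x).toReal) f := by
  unfold shannonEntropy pushEnt
  rw [tsum_fintype]
  refine Finset.sum_congr rfl fun a _ => ?_
  congr 1
  rw [PMF.map_apply, tsum_fintype]
  rw [ENNReal.toReal_sum (fun x _ => by
    split
    · exact PMF.apply_ne_top p x
    · exact ENNReal.zero_ne_top)]
  refine Finset.sum_congr rfl fun x _ => ?_
  by_cases h : f x = a
  · simp [h]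
  · rw [if_neg h, if_neg (fun hh => h hh.symm)]
    simp

lemma total_one (p : PMF Ω) : ∑ x, ((p x).toReal) = 1 := by
  have h := p.tsum_coe
  rw [tsum_fintype] at h
  rw [← ENNReal.toReal_sum (fun x _ => PMF.apply_ne_top p x), h, ENNReal.toReal_one]

end abs

section shearer
variable {n : ℕ} {B : Fin n → Type*} [∀ i, Fintype (B i)]

noncomputable def resF (s : Finset (Fin n)) : (∀ i, B i) → (∀ j : {j : Fin n // j ∈ s}, B j.1) :=
  fun x j => x j.1

noncomputable def FE (p : (∀ i, B i) → ℝ) (s : Finset (Fin n)) : ℝ :=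
  pushEnt p (resF s)

lemma FE_pair (p : (∀ i, B i) → ℝ) (s t : Finset (Fin n)) :
    pushEnt p (fun x => (resF s x, resF t x)) = FE p (s ∪ t) := by
  have hφ : Function.Injective
      (fun (y : ∀ j : {j : Fin n // j ∈ s ∪ t}, B j.1) =>
        ((fun j : {j : Fin n // j ∈ s} => y ⟨j.1, Finset.mem_union_left t j.2⟩),
         (fun j : {j : Fin n // j ∈ t} => y ⟨j.1, Finset.mem_union_right s j.2⟩))) := by
    intro y z hyz
    funext j
    rcases Finset.mem_union.mp j.2 with h1 | h1
    · exact congrFun (congrArg Prod.fst hyz) ⟨j.1, h1⟩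
    · exact congrFun (congrArg Prod.snd hyz) ⟨j.1, h1⟩
  exact pushEnt_comp_inj p (resF (s ∪ t))
    (fun (y : ∀ j : {j : Fin n // j ∈ s ∪ t}, B j.1) =>
        ((fun j : {j : Fin n // j ∈ s} => y ⟨j.1, Finset.mem_union_left t j.2⟩),
         (fun j : {j : Fin n // j ∈ t} => y ⟨j.1, Finset.mem_union_right s j.2⟩))) hφ

lemma FE_triple (p : (∀ i, B i) → ℝ) (s t u : Finset (Fin n)) :
    pushEnt p (fun x => (resF s x, resF t x, resF u x)) = FE p (s ∪ t ∪ u) := by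
  have hφ : Function.Injective
      (fun (y : ∀ j : {j : Fin n // j ∈ s ∪ t ∪ u}, B j.1) =>
        ((fun j : {j : Fin n // j ∈ s} =>
            y ⟨j.1, Finset.mem_union_left u (Finset.mem_union_left t j.2)⟩),
         (fun j : {j : Fin n // j ∈ t} =>
            y ⟨j.1, Finset.mem_union_left u (Finset.mem_union_right s j.2)⟩),
         (fun j : {j : Fin n // j ∈ u} => y ⟨j.1, Finset.mem_union_right _ j.2⟩))) := by
    intro y z hyz
    funext j
    rcases Finset.mem_union.mp j.2 with h1 | h1
    · rcases Finset.mem_union.mp h1 with h2 | h2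
      · exact congrFun (congrArg Prod.fst hyz) ⟨j.1, h2⟩
      · exact congrFun (congrArg (fun w => w.2.1) hyz) ⟨j.1, h2⟩
    · exact congrFun (congrArg (fun w => w.2.2) hyz) ⟨j.1, h1⟩
  exact pushEnt_comp_inj p (resF (s ∪ t ∪ u))
    (fun (y : ∀ j : {j : Fin n // j ∈ s ∪ t ∪ u}, B j.1) =>
        ((fun j : {j : Fin n // j ∈ s} =>
            y ⟨j.1, Finset.mem_union_left u (Finset.mem_union_left t j.2)⟩),
         (fun j : {j : Fin n // j ∈ t} =>
            y ⟨j.1, Finset.mem_union_left u (Finset.mem_union_right s j.2)⟩),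
         (fun j : {j : Fin n // j ∈ u} => y ⟨j.1, Finset.mem_union_right _ j.2⟩))) hφ

lemma FE_sub (p : (∀ i, B i) → ℝ) (hp : ∀ x, 0 ≤ p x)
    (s A T : Finset (Fin n)) (hAT : A ⊆ T) :
    FE p (s ∪ T) + FE p A ≤ FE p (s ∪ A) + FE p T := by
  have h := pushEnt_submodular p hp (resF s) (resF T) (resF A)
  rw [FE_triple p s T A, FE_pair p s A, FE_pair p T A] at h
  rw [show s ∪ T ∪ A = s ∪ T by
        rw [Finset.union_assoc, Finset.union_eq_left.mpr hAT],
      show T ∪ A = T from Finset.union_eq_left.mpr hAT] at h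
  exact h

lemma FE_empty (p : (∀ i, B i) → ℝ) (ht : ∑ x, p x = 1) :
    FE p (∅ : Finset (Fin n)) = 0 := by
  haveI hu : Unique (∀ j : {j : Fin n // j ∈ (∅ : Finset (Fin n))}, B j.1) :=
    { default := fun j => absurd j.2 (Finset.notMem_empty j.1)
      uniq := fun a => funext fun j => absurd j.2 (Finset.notMem_empty j.1) }
  show ∑ a, Real.negMulLog (mass p (resF ∅) a) = 0
  rw [Fintype.sum_unique]
  have hm : mass p (resF (∅ : Finset (Fin n))) default = 1 := by
    unfold mass
    have hd : ∀ x : ∀ i, B i, resF (∅ : Finset (Fin n)) x = default := fun x => hu.uniq _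
    simp only [hd, if_pos rfl]
    exact ht
  rw [hm, Real.negMulLog_one]

lemma FE_univ (p : PMF (∀ i, B i)) :
    FE (fun x => (p x).toReal) (Finset.univ : Finset (Fin n)) = shannonEntropy p := by
  have hφ : Function.Injective
      (fun (y : ∀ j : {j : Fin n // j ∈ (Finset.univ : Finset (Fin n))}, B j.1) =>
        (fun i : Fin n => y ⟨i, Finset.mem_univ i⟩ : ∀ i, B i)) := by
    intro y z hyz
    funext j
    exact congrFun hyz j.1
  have h := pushEnt_comp_inj (fun x => (p x).toReal) (resF Finset.univ)
    (fun (y : ∀ j : {j : Fin n // j ∈ (Finset.univ : Finset (Fin n))}, B j.1) =>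
        (fun i : Fin n => y ⟨i, Finset.mem_univ i⟩ : ∀ i, B i)) hφ
  have h2 : pushEnt (fun x => (p x).toReal) (fun (x : ∀ i, B i) => x) = shannonEntropy p := by
    unfold pushEnt shannonEntropy
    rw [tsum_fintype]
    refine Finset.sum_congr rfl fun a _ => ?_
    congr 1
    unfold mass
    simp
  exact h.symm.trans h2

noncomputable def Gm (p : (∀ i, B i) → ℝ) (m : ℕ) : ℝ :=
  FE p (Finset.univ.filter fun j : Fin n => (j : ℕ) < m)

lemma chain_lower (p : (∀ i, B i) → ℝ) (hp : ∀ x, 0 ≤ p x) (ht : ∑ x, p x = 1)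
    (s : Finset (Fin n)) :
    ∑ i ∈ s, (Gm p (i.1 + 1) - Gm p i.1) ≤ FE p s := by
  induction s using Finset.induction_on_max with
  | empty =>
    rw [Finset.sum_empty, FE_empty p ht]
  | insert a s hmax ih =>
    have hanotin : a ∉ s := fun h => lt_irrefl a (hmax a h)
    rw [Finset.sum_insert hanotin]
    have hsubset : s ⊆ Finset.univ.filter (fun j : Fin n => (j : ℕ) < a.1) := fun j hj =>
      Finset.mem_filter.mpr ⟨Finset.mem_univ _, (Fin.lt_def.mp (hmax j hj))⟩
    have hFsub := FE_sub p hp {a} s (Finset.univ.filter fun j : Fin n => (j : ℕ) < a.1) hsubset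
    have hunion1 : {a} ∪ (Finset.univ.filter fun j : Fin n => (j : ℕ) < a.1)
        = Finset.univ.filter fun j : Fin n => (j : ℕ) < a.1 + 1 := by
      ext j
      simp only [Finset.mem_union, Finset.mem_filter, Finset.mem_univ, true_and,
        Finset.mem_singleton, Nat.lt_succ_iff_lt_or_eq, Fin.ext_iff]
      tauto
    have hunion2 : {a} ∪ s = insert a s := (Finset.insert_eq a s).symm
    rw [hunion1, hunion2] at hFsub
    have hG1 : Gm p (a.1 + 1) = FE p (Finset.univ.filter fun j : Fin n => (j : ℕ) < a.1 + 1) := rfl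
    have hG0 : Gm p a.1 = FE p (Finset.univ.filter fun j : Fin n => (j : ℕ) < a.1) := rfl
    linarith

lemma Gm_top (p : (∀ i, B i) → ℝ) : Gm p n = FE p Finset.univ := by
  unfold Gm
  congr 1
  exact Finset.filter_true_of_mem fun j _ => j.isLt

lemma telescope (p : (∀ i, B i) → ℝ) :
    ∑ i : Fin n, (Gm p (i.1 + 1) - Gm p i.1) = Gm p n - Gm p 0 := by
  rw [Fin.sum_univ_eq_sum_range (fun m => Gm p (m + 1) - Gm p m) n]
  exact Finset.sum_range_sub (Gm p) n

end shearer

section msets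
variable {σ : Type*}

lemma msum_swap {ι : Type*} [Fintype ι] (m : Multiset σ) (f : ι → σ → ℝ) :
    (m.map fun s => ∑ i, f i s).sum = ∑ i, (m.map (f i)).sum := by
  induction m using Multiset.induction_on with
  | empty => simp
  | cons a t ih => simp [ih, Finset.sum_add_distrib]

lemma msum_ite (m : Multiset σ) (P : σ → Prop) [DecidablePred P] (c : ℝ) :
    (m.map fun s => if P s then c else 0).sum = (m.countP P) * c := by
  induction m using Multiset.induction_on with
  | empty => simp
  | cons a t ih =>
    rw [Multiset.map_cons, Multiset.sum_cons, ih, Multiset.countP_cons]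
    push_cast
    split <;> ring

lemma msum_le (m : Multiset σ) (f g : σ → ℝ) (h : ∀ s ∈ m, f s ≤ g s) :
    (m.map f).sum ≤ (m.map g).sum := by
  induction m using Multiset.induction_on with
  | empty => simp
  | cons a t ih =>
    rw [Multiset.map_cons, Multiset.sum_cons, Multiset.map_cons, Multiset.sum_cons]
    exact add_le_add (h a (Multiset.mem_cons_self a t))
      (ih fun s hs => h s (Multiset.mem_cons_of_mem hs))

end msets


/-- Shearer's inequality: if each `i ∈ [n]` lies in exactly `k` members of
the multiset `𝒮`, then `k·H(X) ≤ ∑_{S ∈ 𝒮} H(X_S)` for any random variable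
`X = (X_1, …, X_n)` with values in `B 1 × ⋯ × B n`. -/
theorem stmt10 {n k : ℕ} (hn : 2 ≤ n) (B : Fin n → Type*) [∀ i, Fintype (B i)]
    (𝒮 : Multiset (Finset (Fin n)))
    (hcover : ∀ i : Fin n, 𝒮.countP (fun s => i ∈ s) = k)
    (p : PMF (∀ i, B i)) :
    (k : ℝ) * shannonEntropy p ≤
      (𝒮.map fun s =>
        shannonEntropy (p.map fun x (j : {j : Fin n // j ∈ s}) => x j.1)).sum := by
  set pR : (∀ i, B i) → ℝ := fun x => (p x).toReal with hpRdef
  have hnn : ∀ x, 0 ≤ pR x := fun x => ENNReal.toReal_nonneg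
  have ht : ∑ x, pR x = 1 := total_one p
  have hFs : ∀ s : Finset (Fin n),
      shannonEntropy (p.map fun x (j : {j : Fin n // j ∈ s}) => x j.1) = FE pR s :=
    fun s => shannon_eq_pushEnt p (resF s)
  rw [show (fun s : Finset (Fin n) =>
      shannonEntropy (p.map fun x (j : {j : Fin n // j ∈ s}) => x j.1))
      = fun s => FE pR s from funext hFs]
  have hlow : (𝒮.map fun s : Finset (Fin n) =>
      ∑ i : Fin n, (if i ∈ s then Gm pR (i.1 + 1) - Gm pR i.1 else 0)).sum
      ≤ (𝒮.map fun s => FE pR s).sum := by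
    refine msum_le _ _ _ fun s _ => ?_
    have h1 : ∑ i : Fin n, (if i ∈ s then Gm pR (i.1 + 1) - Gm pR i.1 else 0)
        = ∑ i ∈ s, (Gm pR (i.1 + 1) - Gm pR i.1) := by
      rw [Finset.sum_ite_mem, Finset.univ_inter]
    rw [h1]
    exact chain_lower pR hnn ht s
  refine le_trans ?_ hlow
  rw [msum_swap 𝒮 (fun i s => if i ∈ s then Gm pR (i.1 + 1) - Gm pR i.1 else 0)]
  have h2 : ∀ i : Fin n, (𝒮.map fun s =>
      if i ∈ s then Gm pR (i.1 + 1) - Gm pR i.1 else 0).sum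
      = (k : ℝ) * (Gm pR (i.1 + 1) - Gm pR i.1) := by
    intro i
    rw [msum_ite 𝒮 (fun s => i ∈ s) (Gm pR (i.1 + 1) - Gm pR i.1), hcover i]
  rw [Finset.sum_congr rfl fun i _ => h2 i, ← Finset.mul_sum, telescope pR]
  have hG0 : Gm pR 0 = 0 := by
    have : (Finset.univ.filter fun j : Fin n => (j : ℕ) < 0) = ∅ := by simp
    unfold Gm
    rw [this]
    exact FE_empty pR ht
  rw [Gm_top pR, FE_univ p, hG0, sub_zero]
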